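/- Let G be a weakly connected digraph with α > 1 source SCCs and β > 1 sink SCCs, and let e = (t, s) be a tight edge (s in a source SCC, t in a sink SCC, there exists s' in a different source SCC with s' ⇝ t, and there exists t' in a different sink SCC with s ⇝ t'). Then G + e has exactly α − 1 source SCCs and exactly β − 1 sink SCCs. -/

import Mathlib

variable {V : Type*}

/-- Directed reachability: reflexive-transitive closure of the edge relation. -/
def Reach (E : V → V → Prop) : V → V → Prop :=
  Relation.ReflTransGen E

/-- Mutual reachability. -/
def Mut (E : V → V → Prop) (u v : V) : Prop :=
  Reach E u v ∧ Reach E v u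

/-- A strongly connected component: an equivalence class of mutual reachability. -/
def IsSCC (E : V → V → Prop) (S : Set V) : Prop :=
  ∃ v, S = {w | Mut E v w}

/-- No edge enters `S` from outside `S`. -/
def NoIn (E : V → V → Prop) (S : Set V) : Prop :=
  ∀ a b, E a b → b ∈ S → a ∈ S

/-- No edge leaves `S`. -/
def NoOut (E : V → V → Prop) (S : Set V) : Prop :=
  ∀ a b, E a b → a ∈ S → b ∈ S

/-- Some edge leaves `S`. -/
def SomeOut (E : V → V → Prop) (S : Set V) : Prop :=
  ∃ a b, E a b ∧ a ∈ S ∧ b ∉ S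

/-- Some edge enters `S` from outside. -/
def SomeIn (E : V → V → Prop) (S : Set V) : Prop :=
  ∃ a b, E a b ∧ a ∉ S ∧ b ∈ S

/-- Weak connectivity: the underlying undirected graph is connected. -/
def WeaklyConn (E : V → V → Prop) : Prop :=
  ∀ u v : V, Relation.ReflTransGen (fun a b => E a b ∨ E b a) u v

/-- The source SCCs: SCCs with some outgoing edge but no incoming edge. -/
def SourceSCCs (E : V → V → Prop) : Set (Set V) :=
  {S | IsSCC E S ∧ NoIn E S ∧ SomeOut E S}

/-- The sink (target) SCCs: SCCs with some incoming edge but no outgoing edge. -/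
def SinkSCCs (E : V → V → Prop) : Set (Set V) :=
  {S | IsSCC E S ∧ NoOut E S ∧ SomeIn E S}

section Aux

variable {E : V → V → Prop} {s t u v w : V}

lemma mut_refl (E : V → V → Prop) (v : V) : Mut E v v :=
  ⟨Relation.ReflTransGen.refl, Relation.ReflTransGen.refl⟩

lemma mut_symm (h : Mut E u v) : Mut E v u := ⟨h.2, h.1⟩

lemma mut_trans (h : Mut E u v) (h' : Mut E v w) : Mut E u w :=
  ⟨h.1.trans h'.1, h'.2.trans h.2⟩

lemma class_eq (h : Mut E u v) : {w | Mut E u w} = {w | Mut E v w} :=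
  Set.ext fun _ => ⟨fun hw => mut_trans (mut_symm h) hw, fun hw => mut_trans h hw⟩

lemma scc_class {S : Set V} (hS : IsSCC E S) {x : V} (hx : x ∈ S) :
    S = {w | Mut E x w} := by
  obtain ⟨v, rfl⟩ := hS
  exact class_eq hx

lemma reach_noIn {C : Set V} (hC : NoIn E C) {x y : V} (h : Reach E x y) :
    y ∈ C → x ∈ C := by
  induction h with
  | refl => exact id
  | tail _ h2 ih => exact fun hc => ih (hC _ _ h2 hc)

lemma reach_mono {F : V → V → Prop} (hEF : ∀ a b, E a b → F a b) (h : Reach E u v) :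
    Reach F u v :=
  Relation.ReflTransGen.mono hEF u v h

lemma mut_mono' {F : V → V → Prop} (hEF : ∀ a b, E a b → F a b) (h : Mut E u v) :
    Mut F u v :=
  ⟨reach_mono hEF h.1, reach_mono hEF h.2⟩

lemma reach_add :
    Reach (fun a b => E a b ∨ (a = t ∧ b = s)) u v ↔
      Reach E u v ∨ (Reach E u t ∧ Reach E s v) := by
  constructor
  · intro h
    induction h with
    | refl => exact Or.inl Relation.ReflTransGen.refl
    | tail _ h2 ih =>
      rcases h2 with h2 | ⟨rfl, rfl⟩
      · rcases ih with h | ⟨h, h'⟩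
        · exact Or.inl (h.tail h2)
        · exact Or.inr ⟨h, h'.tail h2⟩
      · rcases ih with h | ⟨h, _⟩
        · exact Or.inr ⟨h, Relation.ReflTransGen.refl⟩
        · exact Or.inr ⟨h, Relation.ReflTransGen.refl⟩
  · rintro (h | ⟨h1, h2⟩)
    · exact reach_mono (fun _ _ => Or.inl) h
    · exact ((reach_mono (fun _ _ => Or.inl) h1).tail (Or.inr ⟨rfl, rfl⟩)).trans
        (reach_mono (fun _ _ => Or.inl) h2)

lemma mut_add {C : Set V} (hNI : NoIn E C) (hsC : s ∉ C) (hvC : v ∈ C)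
    (h : Mut (fun a b => E a b ∨ (a = t ∧ b = s)) v w) : Mut E v w := by
  obtain ⟨h1, h2⟩ := h
  rw [reach_add] at h1 h2
  have hwv : Reach E w v := by
    rcases h2 with h2 | ⟨_, h2'⟩
    · exact h2
    · exact absurd (reach_noIn hNI h2' hvC) hsC
  rcases h1 with h1 | ⟨_, h1'⟩
  · exact ⟨h1, hwv⟩
  · exact absurd (reach_noIn hNI (h1'.trans hwv) hvC) hsC

lemma main_source (E : V → V → Prop) (s t : V)
    (hs : ∃ S ∈ SourceSCCs E, s ∈ S)
    (ht : ∃ T ∈ SinkSCCs E, t ∈ T)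
    (hs' : ∃ s' : V, (∃ S' ∈ SourceSCCs E, s' ∈ S') ∧ ¬ Mut E s' s ∧ Reach E s' t) :
    SourceSCCs (fun a b => E a b ∨ (a = t ∧ b = s)) =
      SourceSCCs E \ {{w | Mut E s w}} := by
  obtain ⟨T0, hT0, htT0⟩ := ht
  have hTrw : T0 = {w | Mut E t w} := scc_class hT0.1 htT0
  ext C
  simp only [Set.mem_diff, Set.mem_singleton_iff]
  constructor
  · rintro ⟨⟨v, rfl⟩, hNI, hSO⟩
    set E' : V → V → Prop := fun a b => E a b ∨ (a = t ∧ b = s) with hE'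
    have hNIE : NoIn E {w | Mut E' v w} := fun a b hab hb => hNI a b (Or.inl hab) hb
    have hvC : v ∈ {w | Mut E' v w} := mut_refl E' v
    have hsC : s ∉ {w | Mut E' v w} := by
      intro hsC
      have htC : t ∈ {w | Mut E' v w} := hNI t s (Or.inr ⟨rfl, rfl⟩) hsC
      obtain ⟨s', ⟨S', hS', hs'S'⟩, hns, hs't⟩ := hs'
      have hs'C : s' ∈ {w | Mut E' v w} := reach_noIn hNIE hs't htC
      have hss' : Reach E' s s' := (mut_trans (mut_symm hsC) hs'C).1
      rw [hE', reach_add] at hss'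
      have hss'E : Reach E s s' := by
        rcases hss' with h | ⟨_, h⟩ <;> exact h
      have hsS' : s ∈ S' := reach_noIn hS'.2.1 hss'E hs'S'
      rw [scc_class hS'.1 hs'S'] at hsS'
      exact hns hsS'
    refine ⟨⟨⟨v, Set.ext fun w =>
        ⟨fun hw => mut_add hNIE hsC hvC hw,
         fun hw => mut_mono' (fun _ _ => Or.inl) hw⟩⟩, hNIE, ?_⟩, ?_⟩
    · obtain ⟨a, b, hab, haC, hbC⟩ := hSO
      rcases hab with hab | ⟨hat, hbs⟩
      · exact ⟨a, b, hab, haC, hbC⟩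
      · -- a = t ∈ C, so C = T0, but T0 has an incoming edge, contradicting NoIn
        exfalso
        have htC : t ∈ {w | Mut E' v w} := hat ▸ haC
        have hvt : Mut E v t := mut_add hNIE hsC hvC htC
        obtain ⟨a', b', hab', ha', hb'⟩ := hT0.2.2
        rw [hTrw] at hb'
        have hb'C : b' ∈ {w | Mut E' v w} :=
          mut_mono' (fun _ _ => Or.inl) (mut_trans hvt hb')
        have ha'C : a' ∈ {w | Mut E' v w} := hNIE a' b' hab' hb'C
        have : Mut E t a' := mut_trans (mut_symm hvt) (mut_add hNIE hsC hvC ha'C)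
        rw [hTrw] at ha'
        exact ha' this
    · intro h
      rw [h] at hsC
      exact hsC (mut_refl E s)
  · rintro ⟨⟨⟨v, rfl⟩, hNI, ⟨a, b, hab, haC, hbC⟩⟩, hne⟩
    have hvC : v ∈ {w | Mut E v w} := mut_refl E v
    have hsC : s ∉ {w | Mut E v w} := by
      intro h
      exact hne (class_eq h ▸ rfl)
    refine ⟨⟨v, Set.ext fun w =>
        ⟨fun hw => mut_mono' (fun _ _ => Or.inl) hw,
         fun hw => mut_add hNI hsC hvC hw⟩⟩, ?_, ?_⟩
    · rintro a' b' (hab' | ⟨rfl, rfl⟩) hb'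
      · exact hNI a' b' hab' hb'
      · exact absurd hb' hsC
    · exact ⟨a, b, Or.inl hab, haC, hbC⟩

lemma reach_flip : Reach (fun a b => E b a) u v ↔ Reach E v u := by
  constructor
  · intro h
    induction h with
    | refl => exact Relation.ReflTransGen.refl
    | tail _ h2 ih => exact Relation.ReflTransGen.head h2 ih
  · intro h
    induction h with
    | refl => exact Relation.ReflTransGen.refl
    | tail _ h2 ih => exact Relation.ReflTransGen.head h2 ih

lemma mut_flip : Mut (fun a b => E b a) u v ↔ Mut E u v :=
  ⟨fun h => ⟨reach_flip.mp h.2, reach_flip.mp h.1⟩,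
   fun h => ⟨reach_flip.mpr h.2, reach_flip.mpr h.1⟩⟩

lemma sink_flip (E : V → V → Prop) : SinkSCCs E = SourceSCCs (fun a b => E b a) := by
  ext S
  constructor
  · rintro ⟨⟨v, rfl⟩, hNO, a, b, hab, ha, hb⟩
    exact ⟨⟨v, Set.ext fun w => (mut_flip).symm⟩,
      fun a b hab hb => hNO b a hab hb, b, a, hab, hb, ha⟩
  · rintro ⟨⟨v, rfl⟩, hNI, a, b, hab, ha, hb⟩
    exact ⟨⟨v, Set.ext fun w => mut_flip⟩,
      fun a b hab ha => hNI b a hab ha, b, a, hab, hb, ha⟩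

end Aux

/-- adding a tight edge (t,s) when α > 1 and β > 1 decreases both the
number of source SCCs and the number of sink SCCs by exactly one. -/
theorem stmt_12 [Fintype V] (E : V → V → Prop)
    (hW : WeaklyConn E)
    (α β : ℕ)
    (hα : α = (SourceSCCs E).ncard) (hβ : β = (SinkSCCs E).ncard)
    (hα1 : 1 < α) (hβ1 : 1 < β)
    (s t : V)
    (hs : ∃ S ∈ SourceSCCs E, s ∈ S)
    (ht : ∃ T ∈ SinkSCCs E, t ∈ T)
    (hs' : ∃ s' : V, (∃ S' ∈ SourceSCCs E, s' ∈ S') ∧ ¬ Mut E s' s ∧ Reach E s' t)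
    (ht' : ∃ t' : V, (∃ T' ∈ SinkSCCs E, t' ∈ T') ∧ ¬ Mut E t' t ∧ Reach E s t') :
    (SourceSCCs (fun a b => E a b ∨ (a = t ∧ b = s))).ncard = α - 1 ∧
    (SinkSCCs (fun a b => E a b ∨ (a = t ∧ b = s))).ncard = β - 1 := by
  obtain ⟨S0, hS0, hsS0⟩ := hs
  have hS : {w | Mut E s w} ∈ SourceSCCs E := scc_class hS0.1 hsS0 ▸ hS0
  obtain ⟨T0, hT0, htT0⟩ := ht
  have hT : {w | Mut E t w} ∈ SinkSCCs E := scc_class hT0.1 htT0 ▸ hT0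
  constructor
  · rw [main_source E s t ⟨S0, hS0, hsS0⟩ ⟨T0, hT0, htT0⟩ hs', hα,
      Set.ncard_diff_singleton_of_mem hS]
  · -- flip everything
    set F : V → V → Prop := fun a b => E b a with hF
    have hsrcF : SourceSCCs E = SinkSCCs F := (sink_flip F).symm
    have hsnkF : SinkSCCs E = SourceSCCs F := sink_flip E
    have hkey : SinkSCCs (fun a b => E a b ∨ (a = t ∧ b = s)) =
        SourceSCCs (fun a b => F a b ∨ (a = s ∧ b = t)) := by
      rw [sink_flip]
      exact congrArg SourceSCCs (by
        funext a b
        exact propext (or_congr Iff.rfl and_comm))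
    have hsF : ∃ S ∈ SourceSCCs F, t ∈ S := ⟨T0, hsnkF ▸ hT0, htT0⟩
    have htF : ∃ T ∈ SinkSCCs F, s ∈ T := ⟨S0, hsrcF ▸ hS0, hsS0⟩
    have ht'F : ∃ x : V, (∃ S' ∈ SourceSCCs F, x ∈ S') ∧ ¬ Mut F x t ∧ Reach F x s := by
      obtain ⟨t', ⟨T', hT', ht'T'⟩, hnm, hst'⟩ := ht'
      exact ⟨t', ⟨T', hsnkF ▸ hT', ht'T'⟩, fun h => hnm (mut_flip.mp h),
        reach_flip.mpr hst'⟩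
    have hTF : {w | Mut F t w} ∈ SourceSCCs F := by
      have : {w | Mut F t w} = {w | Mut E t w} := Set.ext fun w => mut_flip
      rw [this]
      exact hsnkF ▸ hT
    rw [hkey, main_source F t s hsF htF ht'F, hβ, hsnkF,
      Set.ncard_diff_singleton_of_mem hTF]
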